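/- Let Γ be the cone over a regular graph with sink at the cone point, reduced Laplacian L', and degree vector d on non-sink vertices. If σ ∈ ℤ^{V'} satisfies σ ≥ 0 and σ = L'a for some integral vector a with a ≥ d − 1, then the ℝ-odometer of σ equals a − d + 1; in particular σ is immutable (its ℝ-odometer is integral and equals its ℤ-odometer). -/

import Mathlib

open Matrix

noncomputable section

/-- A finite multigraph without self-loops: each edge `e` has a head and a tail. -/
structure Multigraph where
  V : Type
  E : Type
  fintypeV : Fintype V
  decEqV : DecidableEq V
  fintypeE : Fintype E
  decEqE : DecidableEq E
  head : E → V
  tail : E → V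
  loopless : ∀ e, head e ≠ tail e

namespace Multigraph

variable (G : Multigraph)

instance : Fintype G.V := G.fintypeV
instance : DecidableEq G.V := G.decEqV
instance : Fintype G.E := G.fintypeE
instance : DecidableEq G.E := G.decEqE

/-- `v` and `w` are joined by some edge belonging to `F`. -/
def edgeRel (F : Finset G.E) (v w : G.V) : Prop :=
  ∃ e ∈ F, (G.head e = v ∧ G.tail e = w) ∨ (G.head e = w ∧ G.tail e = v)

/-- Reachability using only edges in `F`. -/
def Reach (F : Finset G.E) : G.V → G.V → Prop :=
  Relation.EqvGen (G.edgeRel F)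

/-- The multigraph is connected. -/
def Connected : Prop := ∀ v w : G.V, G.Reach Finset.univ v w

/-- The number of edges joining `v` and `w`. -/
def edgeCount (v w : G.V) : ℕ :=
  Nat.card {e : G.E // (G.head e = v ∧ G.tail e = w) ∨ (G.head e = w ∧ G.tail e = v)}

/-- The degree of a vertex. -/
def degree (v : G.V) : ℕ :=
  Nat.card {e : G.E // G.head e = v ∨ G.tail e = v}

/-- The Laplacian matrix of the multigraph. -/
def laplacian : Matrix G.V G.V ℤ :=
  Matrix.of fun v w => if v = w then (G.degree v : ℤ) else -(G.edgeCount v w : ℤ)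

/-- The reduced Laplacian: delete the row and column of the sink `s`. -/
def reducedLaplacian (s : G.V) : Matrix {v : G.V // v ≠ s} {v : G.V // v ≠ s} ℤ :=
  Matrix.of fun v w => G.laplacian v.1 w.1

/-- A spanning tree, seen as a set of edges: it connects all vertices and has
`|V| - 1` edges. -/
def IsSpanningTree (T : Finset G.E) : Prop :=
  (∀ v w : G.V, G.Reach T v w) ∧ T.card + 1 = Fintype.card G.V

/-- The number of connected components of the spanning subgraph with edge set `F`. -/
def numComponents (F : Finset G.E) : ℕ :=
  Nat.card (Quotient (Relation.EqvGen.setoid (G.edgeRel F)))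

/-- `F` is the edge set of a spanning forest: the number of connected components of
`(V, F)` equals `|V| - |F|` (i.e. `F` is acyclic). -/
def IsForest (F : Finset G.E) : Prop :=
  G.numComponents F + F.card = Fintype.card G.V

end Multigraph

section Aux

namespace Multigraph

variable (G : Multigraph)

lemma edgeCount_eq_card (v w : G.V) :
    G.edgeCount v w = (Finset.univ.filter
      (fun e => (G.head e = v ∧ G.tail e = w) ∨ (G.head e = w ∧ G.tail e = v))).card := by
  rw [edgeCount, Nat.card_eq_fintype_card, Fintype.card_subtype]

lemma edgeCount_self (v : G.V) : G.edgeCount v v = 0 := by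
  rw [edgeCount_eq_card, Finset.card_eq_zero, Finset.filter_eq_empty_iff]
  intro e _ h
  rcases h with ⟨h1, h2⟩ | ⟨h1, h2⟩ <;> exact G.loopless e (h1.trans h2.symm)

lemma degree_eq_sum (v : G.V) :
    G.degree v = ∑ w ∈ Finset.univ.filter (· ≠ v), G.edgeCount v w := by
  rw [degree, Nat.card_eq_fintype_card, Fintype.card_subtype]
  rw [Finset.card_eq_sum_card_fiberwise
    (f := fun e => if G.head e = v then G.tail e else G.head e)
    (t := Finset.univ.filter (· ≠ v)) ?_]
  · refine Finset.sum_congr rfl fun w hw => ?_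
    simp only [Finset.mem_filter, Finset.mem_univ, true_and] at hw
    rw [edgeCount_eq_card]
    congr 1
    ext e
    simp only [Finset.mem_filter, Finset.mem_univ, true_and]
    constructor
    · rintro ⟨h | h, hf⟩
      · left; refine ⟨h, ?_⟩; rwa [if_pos h] at hf
      · by_cases hh : G.head e = v
        · left; exact ⟨hh, by rwa [if_pos hh] at hf⟩
        · right; rw [if_neg hh] at hf; exact ⟨hf, h⟩
    · rintro (⟨h1, h2⟩ | ⟨h1, h2⟩)
      · exact ⟨Or.inl h1, by rw [if_pos h1, h2]⟩
      · refine ⟨Or.inr h2, ?_⟩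
        have hh : G.head e ≠ v := by rw [h1]; exact hw
        rw [if_neg hh, h1]
  · intro e he
    simp only [Finset.mem_coe, Finset.mem_filter, Finset.mem_univ, true_and] at he ⊢
    rcases he with h | h
    · rw [if_pos h]; intro hc; exact G.loopless e (h.trans hc.symm)
    · by_cases hh : G.head e = v
      · rw [if_pos hh]; intro hc; exact G.loopless e (hh.trans hc.symm)
      · rw [if_neg hh]; exact hh

/-- On the cone (each non-sink vertex joined to `s` by exactly one edge), the
degree of a non-sink vertex is `1` plus the number of edges to other non-sink
vertices. -/
lemma degree_eq_one_add (s : G.V)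
    (hcone : ∀ v : G.V, v ≠ s → G.edgeCount v s = 1)
    (v : {v : G.V // v ≠ s}) :
    G.degree v.1 = 1 + ∑ w ∈ (Finset.univ.filter (· ≠ s)).erase v.1, G.edgeCount v.1 w := by
  rw [degree_eq_sum]
  have hs : s ∈ Finset.univ.filter (· ≠ v.1) := by
    simp [Ne.symm v.2]
  rw [← Finset.add_sum_erase _ _ hs, hcone v.1 v.2]
  congr 1
  congr 1
  ext w
  simp only [Finset.mem_erase, Finset.mem_filter, Finset.mem_univ, true_and]
  tauto

/-- Each row of the reduced Laplacian of the cone sums to `1`. -/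
lemma reducedLaplacian_row_sum (s : G.V)
    (hcone : ∀ v : G.V, v ≠ s → G.edgeCount v s = 1)
    (v : {v : G.V // v ≠ s}) :
    ∑ w : {v : G.V // v ≠ s}, G.reducedLaplacian s v w = 1 := by
  classical
  have hsub : ∑ w : {v : G.V // v ≠ s}, G.reducedLaplacian s v w
      = ∑ w ∈ Finset.univ.filter (· ≠ s),
          (if v.1 = w then (G.degree v.1 : ℤ) else -(G.edgeCount v.1 w : ℤ)) := by
    rw [Finset.sum_subtype (p := fun w => w ≠ s) (Finset.univ.filter (· ≠ s))
      (fun x => by simp)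
      (fun w => if v.1 = w then (G.degree v.1 : ℤ) else -(G.edgeCount v.1 w : ℤ))]
    rfl
  have hv : v.1 ∈ Finset.univ.filter (· ≠ s) := by simp [v.2]
  rw [hsub, ← Finset.add_sum_erase _ _ hv, if_pos rfl]
  have : ∑ w ∈ (Finset.univ.filter (· ≠ s)).erase v.1,
      (if v.1 = w then (G.degree v.1 : ℤ) else -(G.edgeCount v.1 w : ℤ))
      = -∑ w ∈ (Finset.univ.filter (· ≠ s)).erase v.1, (G.edgeCount v.1 w : ℤ) := by
    rw [← Finset.sum_neg_distrib]
    refine Finset.sum_congr rfl fun w hw => ?_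
    rw [if_neg]
    exact fun h => (Finset.mem_erase.1 hw).1 h.symm
  rw [this, G.degree_eq_one_add s hcone v]
  push_cast
  ring

end Multigraph

end Aux

/-- On the cone over a regular graph with sink at the cone point, if `σ ≥ 0` and
`σ = L'a` for an integral `a ≥ d - 1`, then the `ℝ`-odometer of `σ` is `a - d + 1`:
it is a non-negative solution of `σ - L'u ≤ d - 1`, minimal among all real solutions
and (being integral) among all integral solutions; hence `σ` is immutable. -/
theorem cone_odometer_eq
    (G : Multigraph) (hG : G.Connected) (s : G.V)
    (hcone : ∀ v : G.V, v ≠ s → G.edgeCount v s = 1)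
    (hreg : ∃ k : ℕ, ∀ v : G.V, v ≠ s → G.degree v = k + 1)
    (σ a : {v : G.V // v ≠ s} → ℤ)
    (hσ0 : ∀ v, 0 ≤ σ v)
    (ha : ∀ v : {v : G.V // v ≠ s}, (G.degree v.1 : ℤ) - 1 ≤ a v)
    (hσa : (G.reducedLaplacian s).mulVec a = σ) :
    letI A : Matrix {v : G.V // v ≠ s} {v : G.V // v ≠ s} ℝ :=
      (G.reducedLaplacian s).map ((↑) : ℤ → ℝ)
    letI u : {v : G.V // v ≠ s} → ℝ := fun v => ((a v - (G.degree v.1 : ℤ) + 1 : ℤ) : ℝ)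
    ((∀ v, 0 ≤ u v) ∧
        (∀ v, (σ v : ℝ) - A.mulVec u v ≤ (G.degree v.1 : ℝ) - 1)) ∧
      (∀ w : {v : G.V // v ≠ s} → ℝ,
        (∀ v, 0 ≤ w v) →
        (∀ v, (σ v : ℝ) - A.mulVec w v ≤ (G.degree v.1 : ℝ) - 1) →
        ∀ v, u v ≤ w v) ∧
      (∀ w : {v : G.V // v ≠ s} → ℝ, (∀ v, ∃ m : ℤ, w v = (m : ℝ)) →
        (∀ v, 0 ≤ w v) →
        (∀ v, (σ v : ℝ) - A.mulVec w v ≤ (G.degree v.1 : ℝ) - 1) →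
        ∀ v, u v ≤ w v) := by
  classical
  obtain ⟨k, hk⟩ := hreg
  show ((∀ v, 0 ≤ _) ∧ _) ∧ _
  set L : Matrix {v : G.V // v ≠ s} {v : G.V // v ≠ s} ℤ := G.reducedLaplacian s with hL
  set A : Matrix {v : G.V // v ≠ s} {v : G.V // v ≠ s} ℝ := L.map ((↑) : ℤ → ℝ) with hA
  set u' : {v : G.V // v ≠ s} → ℤ := fun v => a v - (G.degree v.1 : ℤ) + 1 with hu'
  set u : {v : G.V // v ≠ s} → ℝ := fun v => ((u' v : ℤ) : ℝ) with hu
  -- `L` applied to the constant vector `k` (= `d - 1`) is `k` again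
  have hrow : ∀ v : {v : G.V // v ≠ s}, ∑ w : {v : G.V // v ≠ s}, L v w = 1 :=
    G.reducedLaplacian_row_sum s hcone
  have hLd : L.mulVec (fun v : {v : G.V // v ≠ s} => (G.degree v.1 : ℤ) - 1)
      = fun v : {v : G.V // v ≠ s} => (G.degree v.1 : ℤ) - 1 := by
    funext v
    have h1 : (fun w : {v : G.V // v ≠ s} => (G.degree w.1 : ℤ) - 1) = fun _ : {v : G.V // v ≠ s} => (k : ℤ) := by
      funext w; rw [hk w.1 w.2]; push_cast; ring
    rw [Matrix.mulVec, h1]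
    have : (L v) ⬝ᵥ (fun _ : {v : G.V // v ≠ s} => (k : ℤ)) = (∑ w : {v : G.V // v ≠ s}, L v w) * k := by
      rw [dotProduct, Finset.sum_mul]
    rw [this, hrow v, hk v.1 v.2]
    push_cast; ring
  -- `L u' = σ - (d - 1)`
  have hLu' : L.mulVec u' = fun v : {v : G.V // v ≠ s} => σ v - ((G.degree v.1 : ℤ) - 1) := by
    have : u' = a - fun v : {v : G.V // v ≠ s} => (G.degree v.1 : ℤ) - 1 := by
      funext v; simp [hu']; ring
    rw [this, Matrix.mulVec_sub, hσa, hLd]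
    rfl
  -- real version
  have hAu : ∀ v : {v : G.V // v ≠ s}, A.mulVec u v = (σ v : ℝ) - ((G.degree v.1 : ℝ) - 1) := by
    intro v
    have : A.mulVec u v = ((L.mulVec u' v : ℤ) : ℝ) := by
      simp only [Matrix.mulVec, dotProduct, hA, Matrix.map_apply, hu]
      push_cast
      rfl
    rw [this, hLu']
    push_cast
    ring
  have hArow : ∀ v : {v : G.V // v ≠ s}, ∑ w : {v : G.V // v ≠ s}, A v w = 1 := by
    intro v
    have : ∑ w : {v : G.V // v ≠ s}, A v w = ((∑ w : {v : G.V // v ≠ s}, L v w : ℤ) : ℝ) := by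
      push_cast [hA, Matrix.map_apply]
      rfl
    rw [this, hrow v]; norm_num
  -- minimality against any real solution
  have hmin : ∀ w : {v : G.V // v ≠ s} → ℝ,
      (∀ v, (σ v : ℝ) - A.mulVec w v ≤ (G.degree v.1 : ℝ) - 1) →
      ∀ v, u v ≤ w v := by
    intro w hw2
    set x : {v : G.V // v ≠ s} → ℝ := fun v => w v - u v with hx
    have hAx : ∀ v, 0 ≤ A.mulVec x v := by
      intro v
      have : A.mulVec x v = A.mulVec w v - A.mulVec u v := by
        rw [hx]
        have : x = w - u := rfl
        rw [show (fun v => w v - u v) = w - u from rfl, Matrix.mulVec_sub]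
        rfl
      rw [this, hAu v]
      have := hw2 v
      linarith
    -- minimum principle
    have hxnn : ∀ v, 0 ≤ x v := by
      intro v
      obtain ⟨m, _, hm⟩ := Finset.exists_min_image Finset.univ x
        ⟨v, Finset.mem_univ v⟩
      have hkey : A.mulVec x m ≤ x m := by
        have hterm : ∀ w' : {v : G.V // v ≠ s}, A m w' * x w' ≤ A m w' * x m := by
          intro w'
          by_cases hw' : w' = m
          · subst hw'; exact le_refl _
          · have hA0 : A m w' ≤ 0 := by
              have : L m w' = -(G.edgeCount m.1 w'.1 : ℤ) := by
                simp only [hL, Multigraph.reducedLaplacian, Multigraph.laplacian,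
                  Matrix.of_apply]
                rw [if_neg]
                exact fun h => hw' (Subtype.ext h.symm)
              have : A m w' = ((-(G.edgeCount m.1 w'.1 : ℤ) : ℤ) : ℝ) := by
                rw [hA, Matrix.map_apply, this]
              rw [this]; push_cast
              simp [neg_nonpos]
            exact mul_le_mul_of_nonpos_left (hm w' (Finset.mem_univ w')) hA0
        calc A.mulVec x m = ∑ w' : {v : G.V // v ≠ s}, A m w' * x w' := rfl
          _ ≤ ∑ w' : {v : G.V // v ≠ s}, A m w' * x m := Finset.sum_le_sum fun w' _ => hterm w'
          _ = (∑ w' : {v : G.V // v ≠ s}, A m w') * x m := by rw [Finset.sum_mul]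
          _ = x m := by rw [hArow m]; ring
      have h0m : 0 ≤ x m := le_trans (hAx m) hkey
      exact le_trans h0m (hm v (Finset.mem_univ v))
    intro v
    have h : 0 ≤ w v - u v := hxnn v
    linarith
  refine ⟨⟨?_, ?_⟩, ?_, ?_⟩
  · intro v
    have h1 := ha v
    have h2 : (0 : ℤ) ≤ a v - (G.degree v.1 : ℤ) + 1 := by omega
    exact_mod_cast h2
  · intro v
    rw [hAu v]
    linarith
  · intro w _ hw2
    exact hmin w hw2
  · intro w _ _ hw2
    exact hmin w hw2
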